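/- Under the hypotheses τ(ξ)τ(-ξ) = e and Dτ_ξ invertible, the composed dual operator satisfies (Dτ⁻¹_{-hξ})* ∘ (Dτ_{hξ})* = Ad*_{τ(-hξ)} as maps 𝔤* → 𝔤*. -/

import Mathlib

/-- Under `τ(ξ)τ(-ξ) = e` and invertibility of the left-trivialized
differential `Dτ_ξ(η) = τ(-ξ)·Fτ_ξ(η)`, the composed dual operator satisfies
`(Dτ⁻¹_{-hξ})* ∘ (Dτ_{hξ})* = Ad*_{τ(-hξ)}` on `𝔤*`: for every covector `μ`
and every `v`, `μ(Dτ_{hξ}(Dτ_{-hξ}⁻¹ v)) = μ(τ(-hξ) · v · τ(-hξ)⁻¹)`, where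
`τ(-hξ)⁻¹ = τ(hξ)`. -/
theorem dual_Dtau_composition_eq_coAd
    {A : Type*} [NormedRing A] [NormedAlgebra ℝ A] [CompleteSpace A]
    (τ : A → A) (Fτ : A → A →L[ℝ] A) (D : A → (A ≃ₗ[ℝ] A))
    (hinv : ∀ ξ : A, τ ξ * τ (-ξ) = 1)
    (hinv' : ∀ ξ : A, τ (-ξ) * τ ξ = 1)
    (hF : ∀ ξ : A, HasFDerivAt τ (Fτ ξ) ξ)
    (hD : ∀ ξ η : A, D ξ η = τ (-ξ) * Fτ ξ η)
    (h : ℝ) (ξ : A) :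
    ∀ (μ : Module.Dual ℝ A) (v : A),
      μ (D (h • ξ) ((D (-(h • ξ))).symm v))
        = μ (τ (-(h • ξ)) * v * τ (h • ξ)) := by
  -- Key identity: Fτ a η * τ(-a) = τ a * Fτ(-a) η, from differentiating τ(ξ)τ(-ξ)=1.
  have key : ∀ a η : A, Fτ a η * τ (-a) = τ a * Fτ (-a) η := by
    intro a η
    have hneg : HasFDerivAt (fun ξ : A => τ (-ξ))
        ((Fτ (-a)).comp (-(ContinuousLinearMap.id ℝ A))) a := by
      have := (hF (-a)).comp a ((-(ContinuousLinearMap.id ℝ A)).hasFDerivAt (x := a))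
      simpa [Function.comp_def] using this
    have hprod : HasFDerivAt (fun ξ : A => τ ξ * τ (-ξ))
        (τ a • ((Fτ (-a)).comp (-(ContinuousLinearMap.id ℝ A)))
          + (Fτ a).smulRight (τ (-a))) a := (hF a).mul' hneg
    have hconst : HasFDerivAt (fun ξ : A => τ ξ * τ (-ξ)) (0 : A →L[ℝ] A) a := by
      have : (fun ξ : A => τ ξ * τ (-ξ)) = fun _ => (1 : A) := funext fun ξ => hinv ξ
      rw [this]; exact hasFDerivAt_const 1 a
    have h0 := hprod.unique hconst
    have := congrArg (fun (L : A →L[ℝ] A) => L η) h0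
    simp only [ContinuousLinearMap.add_apply, ContinuousLinearMap.smul_apply,
      ContinuousLinearMap.smulRight_apply, ContinuousLinearMap.comp_apply,
      ContinuousLinearMap.neg_apply, ContinuousLinearMap.id_apply,
      ContinuousLinearMap.zero_apply, map_neg, smul_eq_mul] at this
    -- this : τ a * -(Fτ (-a) η) + Fτ a η * τ (-a) = 0
    have h1 : τ a * -(Fτ (-a) η) + Fτ a η * τ (-a) = 0 := by
      simpa [smul_eq_mul] using this
    rw [mul_neg, neg_add_eq_zero] at h1
    exact h1.symm
  intro μ v
  set a := h • ξ with ha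
  set w := (D (-a)).symm v with hw
  have hv : v = τ a * Fτ (-a) w := by
    have : D (-a) w = v := (D (-a)).apply_symm_apply v
    rw [hD] at this
    simpa using this.symm
  have hFw : Fτ a w * τ (-a) = v := by rw [key a w, ← hv]
  have : Fτ a w = v * τ a := by
    calc Fτ a w = Fτ a w * (τ (-a) * τ a) := by rw [hinv', mul_one]
    _ = (Fτ a w * τ (-a)) * τ a := by rw [mul_assoc]
    _ = v * τ a := by rw [hFw]
  rw [hD, this, ← mul_assoc]
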